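/- Let M be a binary matroid and let X be an independent set in M with |X| ≥ 2. If x and y are two distinct elements of X, then x and y lie in the same component of the Γ-extension matroid M^X; consequently, any two components of M that each contain an element of X are contained in a single component of M^X. -/

import Mathlib

open Set
open scoped Classical

/-- A circuit of a matroid: a minimal dependent set. -/
def MatroidCircuit {α : Type*} (M : Matroid α) (C : Set α) : Prop :=
  M.Dep C ∧ ∀ D ⊂ C, ¬ M.Dep D

/-- A cocircuit of a matroid: a circuit of the dual matroid. -/
def MatroidCocircuit {α : Type*} (M : Matroid α) (C : Set α) : Prop :=
  MatroidCircuit M✶ C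

/-- The rank of a set in a matroid, as an extended natural number: the supremum of the
cardinalities of independent subsets of the set. -/
noncomputable def matroidERk {α : Type*} (M : Matroid α) (A : Set α) : ℕ∞ :=
  ⨆ I : {I : Set α // M.Indep I ∧ I ⊆ A}, (I : Set α).encard

/-- The rank of a matroid. -/
noncomputable def matroidERank {α : Type*} (M : Matroid α) : ℕ∞ :=
  matroidERk M M.E

/-- Deletion of a set from a matroid: the restriction to the complement. -/
def matroidDelete {α : Type*} (M : Matroid α) (Y : Set α) : Matroid α :=
  M.restrict (M.E \ Y)

/-- A `k`-separation of a matroid `M`: a partition of the ground set into disjoint sets `A`, `B`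
with `min (|A|, |B|) ≥ k` and `r(A) + r(B) - r(M) ≤ k - 1`. -/
def KSeparation {α : Type*} (M : Matroid α) (k : ℕ) (A B : Set α) : Prop :=
  Disjoint A B ∧ A ∪ B = M.E ∧ (k : ℕ∞) ≤ A.encard ∧ (k : ℕ∞) ≤ B.encard ∧
    matroidERk M A + matroidERk M B ≤ matroidERank M + ((k : ℕ∞) - 1)

/-- For `k ≥ 2`, a matroid is `k`-connected if it has no `(k-1)`-separation. -/
def KConnected {α : Type*} (M : Matroid α) (k : ℕ) : Prop :=
  ∀ A B : Set α, ¬ KSeparation M (k - 1) A B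

/-- The relation `e ~ f` iff `e = f` or some circuit contains both `e` and `f`. -/
def ConnRel {α : Type*} (M : Matroid α) (e f : α) : Prop :=
  e = f ∨ ∃ C, MatroidCircuit M C ∧ e ∈ C ∧ f ∈ C

/-- A component of a matroid: an equivalence class of the relation `ConnRel` on the
ground set. -/
def MatroidComponent {α : Type*} (M : Matroid α) (D : Set α) : Prop :=
  ∃ e ∈ M.E, D = {f ∈ M.E | ConnRel M e f}

/-- A matroid is connected if it has exactly one component. -/
def MatroidConnected {α : Type*} (M : Matroid α) : Prop :=
  ∃! D : Set α, MatroidComponent M D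

/-- `M` is the vector matroid over GF(2) of the matrix with column set `S` whose column at
`e ∈ S` is `A e`: a set is independent iff it is a subset of `S` whose columns are linearly
independent over GF(2). -/
def IsBinaryRep {α ρ : Type*} (M : Matroid α) (S : Set α) (A : α → ρ → ZMod 2) : Prop :=
  M.E = S ∧ ∀ I : Set α, M.Indep I ↔ I ⊆ S ∧ LinearIndependent (ZMod 2) (fun e : I => A e.1)

/-- The columns of the matrix `A^X` of the Γ-extension: for each index `i`, the new column
labelled `g i` agrees with the column of `x i` in the old rows and has entry `1` in the new
row (indexed by `none`), while every old column keeps its entries in the old rows and has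
entry `0` in the new row. -/
noncomputable def gammaCols {α ρ ι : Type*} (A : α → ρ → ZMod 2) (x g : ι → α) :
    α → Option ρ → ZMod 2 := fun e o =>
  if h : ∃ i, g i = e then o.elim 1 (fun r => A (x h.choose) r)
  else o.elim 0 (fun r => A e r)


set_option linter.unusedSectionVars false
set_option linter.unusedVariables false

lemma zmod2_eq_one {a : ZMod 2} (h : a ≠ 0) : a = 1 := by revert a; decide

section Bin
variable {α W : Type*} [AddCommGroup W] [Module (ZMod 2) W]

lemma char2_add_self (w : W) : w + w = 0 := by
  have h : (2 : ZMod 2) • w = 0 := by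
    have : (2 : ZMod 2) = 0 := by decide
    rw [this, zero_smul]
  simpa [two_smul] using h

lemma li_iff_zerosum (v : α → W) (I : Set α) :
    LinearIndependent (ZMod 2) (fun e : I => v e.1) ↔
      ∀ T : Finset α, ↑T ⊆ I → ∑ e ∈ T, v e = 0 → T = ∅ := by
  have h := (linearIndependent_comp_subtype_iff (R := ZMod 2) (v := v) (s := I)).trans
    (linearIndepOn_iff (R := ZMod 2) (v := v) (s := I))
  rw [show (fun e : I => v e.1) = v ∘ (↑) from rfl, h]
  constructor
  · intro hli T hTI hT0
    set l : α →₀ ZMod 2 := ∑ e ∈ T, Finsupp.single e 1 with hl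
    have hsupp : l ∈ Finsupp.supported (ZMod 2) (ZMod 2) I := by
      refine Finset.sum_induction _ (fun f => f ∈ Finsupp.supported (ZMod 2) (ZMod 2) I) ?_ ?_ ?_
      · exact fun f g hf hg => (Finsupp.mem_supported' _ _).2 fun a ha =>
          by simp [(Finsupp.mem_supported' _ _).1 hf a ha, (Finsupp.mem_supported' _ _).1 hg a ha]
      · simp [Finsupp.mem_supported]
      · intro e he
        refine (Finsupp.mem_supported' _ _).2 fun a ha => ?_
        rw [Finsupp.single_apply, if_neg]
        rintro rfl; exact ha (hTI he)
    have hcomb : Finsupp.linearCombination (ZMod 2) v l = 0 := by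
      rw [hl, map_sum]
      simpa [Finsupp.linearCombination_single] using hT0
    have hl0 := hli l hsupp hcomb
    by_contra hne
    obtain ⟨a, haT⟩ := Finset.nonempty_of_ne_empty hne
    have : l a = 1 := by
      rw [hl, Finsupp.finset_sum_apply]
      rw [Finset.sum_eq_single a]
      · simp
      · intro b _ hb; simp [Finsupp.single_apply, hb]
      · intro h; exact absurd haT h
    rw [hl0] at this
    simp at this
  · intro hT l hsupp hcomb
    have hall : ∀ a ∈ l.support, l a = 1 := fun a ha =>
      zmod2_eq_one (Finsupp.mem_support_iff.mp ha)
    have hsum : ∑ e ∈ l.support, v e = 0 := by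
      rw [Finsupp.linearCombination_apply, Finsupp.sum] at hcomb
      rw [← hcomb]
      exact Finset.sum_congr rfl fun a ha => by rw [hall a ha, one_smul]
    have := hT l.support ((Finsupp.mem_supported _ _).mp hsupp) hsum
    exact Finsupp.support_eq_empty.mp this
end Bin

section Bin
variable {α W : Type*} [AddCommGroup W] [Module (ZMod 2) W]
variable {N : Matroid α} {S : Set α} {v : α → W}
variable (hNE : N.E = S)
variable (hNI : ∀ I : Set α, N.Indep I ↔ I ⊆ S ∧ LinearIndependent (ZMod 2) (fun e : I => v e.1))

-- from t1 (placeholders: assume proven above)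

include hNE hNI

lemma dep_of_zerosum {T : Finset α} (hTS : ↑T ⊆ S) (h0 : ∑ e ∈ T, v e = 0)
    (hne : T.Nonempty) : N.Dep ↑T := by
  rw [Matroid.dep_iff]
  refine ⟨fun hind => ?_, hNE ▸ hTS⟩
  have hli := ((hNI ↑T).1 hind).2
  have := (li_iff_zerosum v ↑T).1 hli T le_rfl h0
  rw [this] at hne
  exact Finset.not_nonempty_empty hne

lemma zerosum_of_dep {I : Set α} (h : N.Dep I) :
    ∃ T : Finset α, ↑T ⊆ I ∧ T.Nonempty ∧ ∑ e ∈ T, v e = 0 := by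
  rw [Matroid.dep_iff] at h
  have hIS : I ⊆ S := hNE ▸ h.2
  have : ¬ LinearIndependent (ZMod 2) (fun e : I => v e.1) := by
    intro hli; exact h.1 ((hNI I).2 ⟨hIS, hli⟩)
  rw [li_iff_zerosum] at this
  push_neg at this
  obtain ⟨T, hT, h0, hne⟩ := this
  exact ⟨T, hT, hne, h0⟩

lemma circuit_zerosum {C : Set α} (h : MatroidCircuit N C) :
    ∃ T : Finset α, ↑T = C ∧ ∑ e ∈ T, v e = 0 := by
  obtain ⟨T, hTC, hne, h0⟩ := zerosum_of_dep hNE hNI h.1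
  have hTS : ↑T ⊆ S := hTC.trans (hNE ▸ h.1.subset_ground)
  have hdep : N.Dep ↑T := dep_of_zerosum hNE hNI hTS h0 hne
  have : ¬ (↑T ⊂ C) := fun hss => h.2 _ hss hdep
  have heq : ↑T = C := by
    rcases eq_or_ne (↑T : Set α) C with h' | h'
    · exact h'
    · exact absurd (ssubset_of_subset_of_ne hTC h') this
  exact ⟨T, heq, h0⟩

lemma circuit_finset_subset_S {C : Finset α} (h : MatroidCircuit N ↑C) : ↑C ⊆ S :=
  hNE ▸ h.1.subset_ground

lemma dep_contains_circuit : ∀ (T : Finset α), N.Dep ↑T →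
    ∃ C : Finset α, C ⊆ T ∧ MatroidCircuit N ↑C := by
  intro T
  induction T using Finset.strongInduction with
  | _ T ih =>
    intro hdep
    by_cases h : ∀ D : Set α, D ⊂ ↑T → ¬ N.Dep D
    · exact ⟨T, le_rfl, hdep, h⟩
    · push_neg at h
      obtain ⟨D, hss, hDdep⟩ := h
      have hfin : D.Finite := T.finite_toSet.subset hss.subset
      have hcoe : ↑hfin.toFinset = D := hfin.coe_toFinset
      have hss' : hfin.toFinset ⊂ T := by
        rw [← Finset.coe_ssubset, hcoe]; exact hss
      obtain ⟨C, hCsub, hC⟩ := ih hfin.toFinset hss' (by rw [hcoe]; exact hDdep)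
      exact ⟨C, hCsub.trans hss'.subset, hC⟩

lemma cycle_exists_circuit : ∀ (T : Finset α), ↑T ⊆ S → ∑ e ∈ T, v e = 0 →
    ∀ e ∈ T, ∃ C : Finset α, C ⊆ T ∧ MatroidCircuit N ↑C ∧ e ∈ C := by
  intro T
  induction T using Finset.strongInduction with
  | _ T ih =>
    intro hTS h0 e heT
    have hdep : N.Dep ↑T := dep_of_zerosum hNE hNI hTS h0 ⟨e, heT⟩
    obtain ⟨C₀, hC₀sub, hC₀⟩ := dep_contains_circuit hNE hNI T hdep
    by_cases he : e ∈ C₀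
    · exact ⟨C₀, hC₀sub, hC₀, he⟩
    · obtain ⟨T₀, hT₀, h00⟩ := circuit_zerosum hNE hNI hC₀
      obtain rfl : T₀ = C₀ := Finset.coe_injective hT₀
      have hC₀ne : T₀.Nonempty := by
        rw [← Finset.coe_nonempty]; exact hC₀.1.nonempty
      have hssub : T \ T₀ ⊂ T := Finset.sdiff_ssubset hC₀sub hC₀ne
      have h0' : ∑ x ∈ T \ T₀, v x = 0 := by
        have hs := Finset.sum_sdiff (f := v) hC₀sub
        rw [h00, add_zero] at hs
        rw [hs, h0]
      obtain ⟨C, hCsub, hC, heC⟩ := ih (T \ T₀) hssub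
        (fun a ha => hTS (Finset.sdiff_subset ha)) h0'
        e (Finset.mem_sdiff.2 ⟨heT, he⟩)
      exact ⟨C, hCsub.trans Finset.sdiff_subset, hC, heC⟩

end Bin

section Trans
variable {α W : Type*} [AddCommGroup W] [Module (ZMod 2) W]
variable {N : Matroid α} {S : Set α} {v : α → W}

lemma circuit_trans (hNE : N.E = S)
    (hNI : ∀ I : Set α, N.Indep I ↔ I ⊆ S ∧ LinearIndependent (ZMod 2) (fun e : I => v e.1)) :
    ∀ (n : ℕ) (C₁ C₂ : Finset α), (C₁ ∪ C₂).card ≤ n →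
    MatroidCircuit N ↑C₁ → MatroidCircuit N ↑C₂ →
    ∀ e ∈ C₁, ∀ gg ∈ C₂, (↑C₁ ∩ ↑C₂ : Set α).Nonempty →
    ∃ D : Finset α, D ⊆ C₁ ∪ C₂ ∧ MatroidCircuit N ↑D ∧ e ∈ D ∧ gg ∈ D := by
  intro n
  induction n with
  | zero =>
    intro C₁ C₂ hcard _ _ e he _ _ _
    rw [Nat.le_zero, Finset.card_eq_zero, Finset.union_eq_empty] at hcard
    rw [hcard.1] at he; exact absurd he (Finset.notMem_empty e)
  | succ n ih =>
    intro C₁ C₂ hcard hC₁ hC₂ e he gg hgg hint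
    by_cases hg1 : gg ∈ C₁
    · exact ⟨C₁, Finset.subset_union_left, hC₁, he, hg1⟩
    by_cases he2 : e ∈ C₂
    · exact ⟨C₂, Finset.subset_union_right, hC₂, he2, hgg⟩
    obtain ⟨f, hf⟩ := hint
    have hf1 : f ∈ C₁ := hf.1
    have hf2 : f ∈ C₂ := hf.2
    -- sums of circuits are zero
    have h01 : ∑ x ∈ C₁, v x = 0 := by
      obtain ⟨T₁, hT₁, h01⟩ := circuit_zerosum hNE hNI hC₁
      rwa [show T₁ = C₁ from Finset.coe_injective hT₁] at h01
    have h02 : ∑ x ∈ C₂, v x = 0 := by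
      obtain ⟨T₂, hT₂, h02⟩ := circuit_zerosum hNE hNI hC₂
      rwa [show T₂ = C₂ from Finset.coe_injective hT₂] at h02
    have hC₁S : ↑C₁ ⊆ S := circuit_finset_subset_S hNE hNI hC₁
    have hC₂S : ↑C₂ ⊆ S := circuit_finset_subset_S hNE hNI hC₂
    -- the symmetric difference K
    set K : Finset α := (C₁ ∪ C₂) \ (C₁ ∩ C₂) with hK
    have hKsub : K ⊆ C₁ ∪ C₂ := Finset.sdiff_subset
    have hKS : ↑K ⊆ S := fun a ha => by
      rcases Finset.mem_union.1 (hKsub ha) with h | h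
      · exact hC₁S h
      · exact hC₂S h
    have hK0 : ∑ x ∈ K, v x = 0 := by
      have h1 : ∑ x ∈ K, v x + ∑ x ∈ C₁ ∩ C₂, v x = ∑ x ∈ C₁ ∪ C₂, v x :=
        Finset.sum_sdiff Finset.inter_subset_union
      have h2 : ∑ x ∈ C₁ ∪ C₂, v x + ∑ x ∈ C₁ ∩ C₂, v x = ∑ x ∈ C₁, v x + ∑ x ∈ C₂, v x :=
        Finset.sum_union_inter
      have h3 : ∑ x ∈ C₁ ∪ C₂, v x + ∑ x ∈ C₁ ∩ C₂, v x = 0 := by rw [h2, h01, h02, add_zero]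
      calc ∑ x ∈ K, v x
          = (∑ x ∈ K, v x + ∑ x ∈ C₁ ∩ C₂, v x) + ∑ x ∈ C₁ ∩ C₂, v x := by
            rw [add_assoc, char2_add_self, add_zero]
        _ = 0 := by rw [h1, ← h1, h1, h3]
    have hfK : f ∉ K := by
      rw [hK, Finset.mem_sdiff]
      intro h; exact h.2 (Finset.mem_inter.2 ⟨hf1, hf2⟩)
    have hKlt : K.card < (C₁ ∪ C₂).card :=
      Finset.card_lt_card ⟨hKsub, fun hsub => hfK (hsub (Finset.mem_union.2 (Or.inl hf1)))⟩
    -- circuit C₃ through e inside K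
    have heK : e ∈ K := Finset.mem_sdiff.2 ⟨Finset.mem_union.2 (Or.inl he),
      fun h => he2 (Finset.mem_inter.1 h).2⟩
    obtain ⟨C₃, hC₃K, hC₃, heC₃⟩ := cycle_exists_circuit hNE hNI K hKS hK0 e heK
    by_cases hgC₃ : gg ∈ C₃
    · exact ⟨C₃, hC₃K.trans hKsub, hC₃, heC₃, hgC₃⟩
    have hC₃C₂ : (↑C₃ ∩ ↑C₂ : Set α).Nonempty := by
      by_contra hemp
      rw [Set.not_nonempty_iff_eq_empty] at hemp
      have hsub : C₃ ⊆ C₁ := fun a ha => by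
        rcases Finset.mem_union.1 (hKsub (hC₃K ha)) with h | h
        · exact h
        · exact absurd (Set.mem_inter (Finset.mem_coe.2 ha) (Finset.mem_coe.2 h))
            (hemp ▸ Set.notMem_empty a)
      have hss : (↑C₃ : Set α) ⊂ ↑C₁ := by
        refine ssubset_of_subset_of_ne (Finset.coe_subset.2 hsub) fun hcoe => ?_
        have : f ∈ C₃ := by rw [← Finset.coe_inj] at *; exact (Finset.coe_injective hcoe) ▸ hf1
        exact hfK (hC₃K this)
      exact hC₁.2 _ hss hC₃.1
    -- circuit C₄ through gg inside K
    have hggK : gg ∈ K := Finset.mem_sdiff.2 ⟨Finset.mem_union.2 (Or.inr hgg),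
      fun h => hg1 (Finset.mem_inter.1 h).1⟩
    obtain ⟨C₄, hC₄K, hC₄, hggC₄⟩ := cycle_exists_circuit hNE hNI K hKS hK0 gg hggK
    by_cases heC₄ : e ∈ C₄
    · exact ⟨C₄, hC₄K.trans hKsub, hC₄, heC₄, hggC₄⟩
    have hC₄C₁ : (↑C₄ ∩ ↑C₁ : Set α).Nonempty := by
      by_contra hemp
      rw [Set.not_nonempty_iff_eq_empty] at hemp
      have hsub : C₄ ⊆ C₂ := fun a ha => by
        rcases Finset.mem_union.1 (hKsub (hC₄K ha)) with h | h
        · exact absurd (Set.mem_inter (Finset.mem_coe.2 ha) (Finset.mem_coe.2 h))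
            (hemp ▸ Set.notMem_empty a)
        · exact h
      have hss : (↑C₄ : Set α) ⊂ ↑C₂ := by
        refine ssubset_of_subset_of_ne (Finset.coe_subset.2 hsub) fun hcoe => ?_
        have : f ∈ C₄ := (Finset.coe_injective hcoe) ▸ hf2
        exact hfK (hC₄K this)
      exact hC₂.2 _ hss hC₄.1
    by_cases hcase : C₃ ∪ C₂ = C₁ ∪ C₂
    · -- C₃ ∩ C₄ nonempty; recurse on (C₃, C₄) inside K
      obtain ⟨h, hh⟩ := hC₄C₁
      have hhC₄ : h ∈ C₄ := hh.1
      have hhC₁ : h ∈ C₁ := hh.2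
      have hhK : h ∈ K := hC₄K hhC₄
      have hhC₂ : h ∉ C₂ := fun hc =>
        (Finset.mem_sdiff.1 hhK).2 (Finset.mem_inter.2 ⟨hhC₁, hc⟩)
      have hhC₃ : h ∈ C₃ := by
        have : h ∈ C₃ ∪ C₂ := hcase ▸ Finset.mem_union.2 (Or.inl hhC₁)
        rcases Finset.mem_union.1 this with h' | h'
        · exact h'
        · exact absurd h' hhC₂
      have hcard' : (C₃ ∪ C₄).card ≤ n := by
        have h1 : C₃ ∪ C₄ ⊆ K := Finset.union_subset hC₃K hC₄K
        have := (Finset.card_le_card h1).trans_lt hKlt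
        omega
      obtain ⟨D, hD, hDc, heD, hggD⟩ := ih C₃ C₄ hcard' hC₃ hC₄ e heC₃ gg hggC₄
        ⟨h, Set.mem_inter (Finset.mem_coe.2 hhC₃) (Finset.mem_coe.2 hhC₄)⟩
      exact ⟨D, hD.trans ((Finset.union_subset hC₃K hC₄K).trans hKsub), hDc, heD, hggD⟩
    · -- recurse on (C₃, C₂)
      have hsub : C₃ ∪ C₂ ⊆ C₁ ∪ C₂ :=
        Finset.union_subset (hC₃K.trans hKsub) Finset.subset_union_right
      have hcard' : (C₃ ∪ C₂).card ≤ n := by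
        have := Finset.card_lt_card (ssubset_of_subset_of_ne hsub hcase)
        omega
      obtain ⟨D, hD, hDc, heD, hggD⟩ := ih C₃ C₂ hcard' hC₃ hC₂ e heC₃ gg hgg hC₃C₂
      exact ⟨D, hD.trans hsub, hDc, heD, hggD⟩

lemma connRel_symm {p q : α} (h : ConnRel N p q) : ConnRel N q p := by
  rcases h with h | ⟨C, hC, hp, hq⟩
  · exact Or.inl h.symm
  · exact Or.inr ⟨C, hC, hq, hp⟩

lemma connRel_trans (hNE : N.E = S)
    (hNI : ∀ I : Set α, N.Indep I ↔ I ⊆ S ∧ LinearIndependent (ZMod 2) (fun e : I => v e.1))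
    {p q r : α} (h1 : ConnRel N p q) (h2 : ConnRel N q r) : ConnRel N p r := by
  rcases h1 with rfl | ⟨C₁, hC₁, hp, hq⟩
  · exact h2
  rcases h2 with rfl | ⟨C₂, hC₂, hq', hr⟩
  · exact Or.inr ⟨C₁, hC₁, hp, hq⟩
  obtain ⟨T₁, hT₁, -⟩ := circuit_zerosum hNE hNI hC₁
  obtain ⟨T₂, hT₂, -⟩ := circuit_zerosum hNE hNI hC₂
  subst hT₁; subst hT₂
  obtain ⟨D, _, hDc, hpD, hrD⟩ := circuit_trans hNE hNI (T₁ ∪ T₂).card T₁ T₂ le_rfl hC₁ hC₂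
    p (by exact_mod_cast hp) r (by exact_mod_cast hr) ⟨q, Set.mem_inter hq hq'⟩
  exact Or.inr ⟨↑D, hDc, hpD, hrD⟩
end Trans

noncomputable def extMap (ρ : Type*) : (ρ → ZMod 2) →ₗ[ZMod 2] (Option ρ → ZMod 2) where
  toFun f := fun o => o.elim 0 f
  map_add' f g := by funext o; cases o <;> simp
  map_smul' c f := by funext o; cases o <;> simp

lemma extMap_ker (ρ : Type*) : LinearMap.ker (extMap ρ) = ⊥ := by
  rw [LinearMap.ker_eq_bot]
  intro f f' h
  funext r
  exact congrFun h (some r)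

section Gamma
variable {α ρ ι : Type*} [Fintype ι] [Nonempty ι]
variable {M MX : Matroid α} {S : Set α} {A : α → ρ → ZMod 2} {x g : ι → α}

lemma gammaCols_of_mem_S (hdisj : Disjoint S (Set.range g)) {e : α} (he : e ∈ S) :
    gammaCols A x g e = extMap ρ (A e) := by
  have hne : ¬ ∃ i, g i = e := by
    rintro ⟨i, rfl⟩
    exact Set.disjoint_left.1 hdisj he ⟨i, rfl⟩
  funext o
  simp only [gammaCols, dif_neg hne]
  rfl

lemma gammaCols_g (hginj : Function.Injective g) (i : ι) :
    gammaCols A x g (g i) = fun o => o.elim 1 (A (x i)) := by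
  have hex : ∃ k, g k = g i := ⟨i, rfl⟩
  have hch : hex.choose = i := hginj hex.choose_spec
  funext o
  simp only [gammaCols, dif_pos hex, hch]

lemma pair_li (hxinj : Function.Injective x) (hxS : Set.range x ⊆ S)
    (hXindep : M.Indep (Set.range x)) (hM : IsBinaryRep M S A)
    {i j : ι} (hij : i ≠ j) (c₁ c₂ : ZMod 2)
    (h : c₁ • A (x i) + c₂ • A (x j) = 0) : c₁ = 0 ∧ c₂ = 0 := by
  have hli : LinearIndependent (ZMod 2) (fun e : Set.range x => A e.1) :=
    ((hM.2 _).1 hXindep).2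
  have hinj : Function.Injective (fun k : Fin 2 =>
      (⟨x (![i, j] k), ⟨![i, j] k, rfl⟩⟩ : Set.range x)) := by
    intro k l hkl
    have := hxinj (congrArg Subtype.val hkl)
    fin_cases k <;> fin_cases l <;> simp_all
  have hli2 : LinearIndependent (ZMod 2) (fun k : Fin 2 => A (x (![i, j] k))) :=
    hli.comp _ hinj
  have := Fintype.linearIndependent_iff.1 hli2 ![c₁, c₂] (by
    rw [Fin.sum_univ_two]
    simpa using h)
  exact ⟨this 0, this 1⟩

end Gamma

section Gamma2
variable {α ρ ι : Type*} [Fintype ι] [Nonempty ι]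
variable {M MX : Matroid α} {S : Set α} {A : α → ρ → ZMod 2} {x g : ι → α}

lemma circuit_transfer (hdisj : Disjoint S (Set.range g))
    (hM : IsBinaryRep M S A) (hMX : IsBinaryRep MX (S ∪ Set.range g) (gammaCols A x g))
    {C : Set α} (hC : MatroidCircuit M C) : MatroidCircuit MX C := by
  have hCS : C ⊆ S := hM.1 ▸ hC.1.subset_ground
  obtain ⟨T, hTC, h0⟩ := circuit_zerosum hM.1 hM.2 hC
  have h0' : ∑ e ∈ T, gammaCols A x g e = 0 := by
    have : ∀ e ∈ T, gammaCols A x g e = extMap ρ (A e) := fun e he =>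
      gammaCols_of_mem_S hdisj (hCS (hTC ▸ Finset.mem_coe.2 he))
    rw [Finset.sum_congr rfl this, ← map_sum, h0, map_zero]
  constructor
  · rw [← hTC]
    refine dep_of_zerosum hMX.1 hMX.2 ?_ h0' ?_
    · exact fun a ha => Or.inl (hCS (hTC ▸ ha))
    · rw [← Finset.coe_nonempty, hTC]; exact hC.1.nonempty
  · intro D hD hdep
    have hDC : D ⊆ C := hD.subset
    have hDS : D ⊆ S := hDC.trans hCS
    have hMind : M.Indep D := by
      have := hC.2 D hD
      rw [← Matroid.not_dep_iff (by rw [hM.1]; exact hDS)] at *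
      exact this
    have hli : LinearIndependent (ZMod 2) (fun e : D => A e.1) := ((hM.2 D).1 hMind).2
    have hli' : LinearIndependent (ZMod 2) (fun e : D => gammaCols A x g e.1) := by
      have := hli.map' (extMap ρ) (extMap_ker ρ)
      have heq : (fun e : D => gammaCols A x g e.1) = (extMap ρ) ∘ (fun e : D => A e.1) := by
        funext e
        exact gammaCols_of_mem_S hdisj (hDS e.2)
      rw [heq]
      exact this
    have : MX.Indep D := (hMX.2 D).2 ⟨fun a ha => Or.inl (hDS ha), hli'⟩
    exact this.not_dep hdep

lemma special_circuit (hxinj : Function.Injective x) (hginj : Function.Injective g)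
    (hxS : Set.range x ⊆ S) (hdisj : Disjoint S (Set.range g))
    (hXindep : M.Indep (Set.range x)) (hM : IsBinaryRep M S A)
    (hMX : IsBinaryRep MX (S ∪ Set.range g) (gammaCols A x g))
    {i j : ι} (hij : i ≠ j) :
    MatroidCircuit MX ({x i, g i, x j, g j} : Set α) := by
  have hxig : ∀ k l : ι, x k ≠ g l := fun k l h =>
    Set.disjoint_left.1 hdisj (hxS ⟨k, rfl⟩) (h ▸ ⟨l, rfl⟩)
  have hxx : x i ≠ x j := fun h => hij (hxinj h)
  have hgg : g i ≠ g j := fun h => hij (hginj h)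
  set Q : Finset α := insert (x i) (insert (g i) (insert (x j) {g j})) with hQ
  have hn1 : x i ∉ (insert (g i) (insert (x j) ({g j} : Finset α))) := by
    simp only [Finset.mem_insert, Finset.mem_singleton]
    push_neg
    exact ⟨hxig i i, hxx, hxig i j⟩
  have hn2 : g i ∉ (insert (x j) ({g j} : Finset α)) := by
    simp only [Finset.mem_insert, Finset.mem_singleton]
    push_neg
    exact ⟨fun h => hxig j i h.symm, hgg⟩
  have hn3 : x j ∉ ({g j} : Finset α) := by
    simp only [Finset.mem_singleton]
    exact hxig j j
  have hQcoe : (↑Q : Set α) = ({x i, g i, x j, g j} : Set α) := by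
    simp only [hQ, Finset.coe_insert, Finset.coe_singleton]
  have hmemxi : x i ∈ Q := Finset.mem_insert_self _ _
  have hmemgi : g i ∈ Q := Finset.mem_insert_of_mem (Finset.mem_insert_self _ _)
  have hmemxj : x j ∈ Q :=
    Finset.mem_insert_of_mem (Finset.mem_insert_of_mem (Finset.mem_insert_self _ _))
  have hmemgj : g j ∈ Q := Finset.mem_insert_of_mem (Finset.mem_insert_of_mem
    (Finset.mem_insert_of_mem (Finset.mem_singleton_self _)))
  have hmemQ : ∀ a ∈ Q, a = x i ∨ a = g i ∨ a = x j ∨ a = g j := by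
    intro a ha
    simpa only [hQ, Finset.mem_insert, Finset.mem_singleton] using ha
  have hval_xi : gammaCols A x g (x i) = extMap ρ (A (x i)) :=
    gammaCols_of_mem_S hdisj (hxS ⟨i, rfl⟩)
  have hval_xj : gammaCols A x g (x j) = extMap ρ (A (x j)) :=
    gammaCols_of_mem_S hdisj (hxS ⟨j, rfl⟩)
  have hval_gi := gammaCols_g (A := A) (x := x) hginj i
  have hval_gj := gammaCols_g (A := A) (x := x) hginj j
  have hQS : ↑Q ⊆ S ∪ Set.range g := by
    intro a ha
    rcases hmemQ a ha with rfl | rfl | rfl | rfl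
    · exact Or.inl (hxS ⟨i, rfl⟩)
    · exact Or.inr ⟨i, rfl⟩
    · exact Or.inl (hxS ⟨j, rfl⟩)
    · exact Or.inr ⟨j, rfl⟩
  have hsum : ∀ T : Finset α, T ⊆ Q → ∑ e ∈ T, gammaCols A x g e = 0 → T = ∅ ∨ T = Q := by
    intro T hTQ h0
    have hTQ' : Q ∩ T = T := Finset.inter_eq_right.2 hTQ
    have hsplit : ∑ e ∈ T, gammaCols A x g e =
        (if x i ∈ T then gammaCols A x g (x i) else 0) +
        ((if g i ∈ T then gammaCols A x g (g i) else 0) +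
        ((if x j ∈ T then gammaCols A x g (x j) else 0) +
        (if g j ∈ T then gammaCols A x g (g j) else 0))) := by
      calc ∑ e ∈ T, gammaCols A x g e
          = ∑ e ∈ Q, if e ∈ T then gammaCols A x g e else 0 := by
            rw [Finset.sum_ite_mem, hTQ']
        _ = _ := by
            rw [hQ, Finset.sum_insert hn1, Finset.sum_insert hn2, Finset.sum_insert hn3,
              Finset.sum_singleton]
    rw [hsplit] at h0
    have h0none := congrFun h0 none
    simp only [Pi.add_apply, apply_ite (fun f : Option ρ → ZMod 2 => f none),
      hval_xi, hval_gi, hval_xj, hval_gj, Pi.zero_apply] at h0none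
    have hnone : (if g i ∈ T then (1 : ZMod 2) else 0) + (if g j ∈ T then (1 : ZMod 2) else 0)
        = 0 := by
      simpa [extMap] using h0none
    have hsome : (if x i ∈ T then (1:ZMod 2) else 0) • A (x i)
        + (if g i ∈ T then (1:ZMod 2) else 0) • A (x i)
        + ((if x j ∈ T then (1:ZMod 2) else 0) • A (x j)
        + (if g j ∈ T then (1:ZMod 2) else 0) • A (x j)) = 0 := by
      funext r
      have h0some := congrFun h0 (some r)
      simp only [Pi.add_apply, apply_ite (fun f : Option ρ → ZMod 2 => f (some r)),
        hval_xi, hval_gi, hval_xj, hval_gj, Pi.zero_apply] at h0some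
      have h0some' : (if x i ∈ T then A (x i) r else 0) +
          ((if g i ∈ T then A (x i) r else 0) +
          ((if x j ∈ T then A (x j) r else 0) + (if g j ∈ T then A (x j) r else 0))) = 0 := by
        simpa [extMap] using h0some
      simp only [Pi.add_apply, Pi.smul_apply, smul_eq_mul, ite_mul, one_mul, zero_mul,
        Pi.zero_apply]
      rw [← add_assoc] at h0some'
      exact h0some'
    have hcomb : ((if x i ∈ T then (1:ZMod 2) else 0) + (if g i ∈ T then (1:ZMod 2) else 0))
          • A (x i)
        + ((if x j ∈ T then (1:ZMod 2) else 0) + (if g j ∈ T then (1:ZMod 2) else 0))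
          • A (x j) = 0 := by
      rw [add_smul, add_smul, ← add_assoc]
      rw [← add_assoc] at hsome
      exact hsome
    obtain ⟨hc1, hc2⟩ := pair_li hxinj hxS hXindep hM hij _ _ hcomb
    have h12 : (x i ∈ T) ↔ (g i ∈ T) := by
      by_cases h1 : x i ∈ T <;> by_cases h2 : g i ∈ T <;> simp_all
    have h34 : (x j ∈ T) ↔ (g j ∈ T) := by
      by_cases h1 : x j ∈ T <;> by_cases h2 : g j ∈ T <;> simp_all
    have h24 : (g i ∈ T) ↔ (g j ∈ T) := by
      by_cases h1 : g i ∈ T <;> by_cases h2 : g j ∈ T <;> simp_all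
    by_cases hxi : x i ∈ T
    · right
      apply Finset.Subset.antisymm hTQ
      intro a ha
      rcases hmemQ a ha with rfl | rfl | rfl | rfl
      · exact hxi
      · exact h12.1 hxi
      · exact h34.2 (h24.1 (h12.1 hxi))
      · exact h24.1 (h12.1 hxi)
    · left
      rw [Finset.eq_empty_iff_forall_notMem]
      intro a ha
      rcases hmemQ a (hTQ ha) with rfl | rfl | rfl | rfl
      · exact hxi ha
      · exact hxi (h12.2 ha)
      · exact hxi (h12.2 (h24.2 (h34.1 ha)))
      · exact hxi (h12.2 (h24.2 ha))
  have hQ0 : ∑ e ∈ Q, gammaCols A x g e = 0 := by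
    rw [hQ, Finset.sum_insert hn1, Finset.sum_insert hn2, Finset.sum_insert hn3,
      Finset.sum_singleton, hval_xi, hval_gi, hval_xj, hval_gj]
    funext o
    cases o with
    | none =>
      simp only [Pi.add_apply, extMap, LinearMap.coe_mk, AddHom.coe_mk, Option.elim,
        Pi.zero_apply]
      rfl
    | some r =>
      simp only [Pi.add_apply, extMap, LinearMap.coe_mk, AddHom.coe_mk, Option.elim,
        Pi.zero_apply]
      calc A (x i) r + (A (x i) r + (A (x j) r + A (x j) r))
          = (A (x i) r + A (x i) r) + (A (x j) r + A (x j) r) := by ring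
        _ = 0 := by rw [char2_add_self (A (x i) r), char2_add_self (A (x j) r), add_zero]
  constructor
  · rw [← hQcoe]
    exact dep_of_zerosum hMX.1 hMX.2 hQS hQ0 ⟨x i, hmemxi⟩
  · intro D hD hdep
    obtain ⟨T, hTD, hTne, hT0⟩ := zerosum_of_dep hMX.1 hMX.2 hdep
    have hTQ : T ⊆ Q := by
      intro a ha
      have h1 : a ∈ D := hTD (Finset.mem_coe.2 ha)
      have h2 := hD.subset h1
      rw [← hQcoe] at h2
      exact Finset.mem_coe.1 h2
    rcases hsum T hTQ hT0 with rfl | rfl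
    · exact Finset.not_nonempty_empty hTne
    · have : D = (↑Q : Set α) := Set.Subset.antisymm (hQcoe ▸ hD.subset) hTD
      rw [hQcoe] at this
      exact hD.ne this
end Gamma2


/-- If `|X| ≥ 2` and `a`, `b` are distinct elements of `X = range x`, then `a` and `b` lie
in the same component of the Γ-extension `M^X`; consequently, any two components of `M` each
meeting `X` are contained in a single component of `M^X`. -/
theorem stmt_17 {α ρ ι : Type*} [Fintype ι] [Nonempty ι]
    (M MX : Matroid α) (S : Set α) (A : α → ρ → ZMod 2) (x g : ι → α)
    (hxinj : Function.Injective x) (hginj : Function.Injective g)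
    (hxS : Set.range x ⊆ S) (hdisj : Disjoint S (Set.range g))
    (hXindep : M.Indep (Set.range x))
    (hM : IsBinaryRep M S A)
    (hMX : IsBinaryRep MX (S ∪ Set.range g) (gammaCols A x g))
    (hX2 : 2 ≤ Fintype.card ι) :
    (∀ a b : α, a ∈ Set.range x → b ∈ Set.range x → a ≠ b →
      ∃ D : Set α, MatroidComponent MX D ∧ a ∈ D ∧ b ∈ D) ∧
      (∀ D₁ D₂ : Set α, MatroidComponent M D₁ → MatroidComponent M D₂ →
        (D₁ ∩ Set.range x).Nonempty → (D₂ ∩ Set.range x).Nonempty →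
        ∃ D : Set α, MatroidComponent MX D ∧ D₁ ⊆ D ∧ D₂ ⊆ D) := by
  have hMXE : MX.E = S ∪ Set.range g := hMX.1
  have hME : M.E = S := hM.1
  have hconnX : ∀ i j : ι, ConnRel MX (x i) (x j) := by
    intro i j
    by_cases hij : i = j
    · exact Or.inl (by rw [hij])
    · exact Or.inr ⟨_, special_circuit hxinj hginj hxS hdisj hXindep hM hMX hij,
        by simp, by simp⟩
  have htrans : ∀ {p q r : α}, ConnRel MX p q → ConnRel MX q r → ConnRel MX p r :=
    fun h1 h2 => connRel_trans hMX.1 hMX.2 h1 h2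
  have htransfer : ∀ {p q : α}, ConnRel M p q → ConnRel MX p q := by
    rintro p q (rfl | ⟨C, hC, hp, hq⟩)
    · exact Or.inl rfl
    · exact Or.inr ⟨C, circuit_transfer hdisj hM hMX hC, hp, hq⟩
  constructor
  · rintro a b ⟨i, rfl⟩ ⟨j, rfl⟩ hab
    refine ⟨{h ∈ MX.E | ConnRel MX (x i) h}, ⟨x i, ?_, rfl⟩, ⟨?_, Or.inl rfl⟩, ⟨?_, hconnX i j⟩⟩
    · rw [hMXE]; exact Or.inl (hxS ⟨i, rfl⟩)
    · rw [hMXE]; exact Or.inl (hxS ⟨i, rfl⟩)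
    · rw [hMXE]; exact Or.inl (hxS ⟨j, rfl⟩)
  · rintro D₁ D₂ ⟨e₁, he₁, rfl⟩ ⟨e₂, he₂, rfl⟩ ⟨a, haD₁, i, rfl⟩ ⟨b, hbD₂, j, rfl⟩
    refine ⟨{h ∈ MX.E | ConnRel MX (x i) h}, ⟨x i, ?_, rfl⟩, ?_, ?_⟩
    · rw [hMXE]; exact Or.inl (hxS ⟨i, rfl⟩)
    · intro h hh
      exact ⟨by rw [hMXE]; exact Or.inl (hME ▸ hh.1),
        htrans (connRel_symm (htransfer haD₁.2)) (htransfer hh.2)⟩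
    · intro h hh
      exact ⟨by rw [hMXE]; exact Or.inl (hME ▸ hh.1),
        htrans (hconnX i j)
          (htrans (connRel_symm (htransfer hbD₂.2)) (htransfer hh.2))⟩
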